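/- Let p be an odd prime, n ≥ 2, N the cyclic group of order p^n, and σ the automorphism of N given by x ↦ x^{p+1}, generating the Sylow p-subgroup K ≅ Z/p^{n-1} of Aut(N). Let G = N ⋊ K. Then |G : G'| = p^n and |γ_i(G) : γ_{i+1}(G)| = p for every i = 2, ..., n; in particular G has nilpotency class exactly n. -/

import Mathlib

/-- The natural map from additive automorphisms of `M` to multiplicative
automorphisms of `Multiplicative M`. -/
def addAutToMulAut (M : Type*) [AddGroup M] :
    Multiplicative (AddAut M) →* MulAut (Multiplicative M) where
  toFun f := AddEquiv.toMultiplicative f.toAdd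
  map_one' := rfl
  map_mul' _ _ := rfl

lemma pow_one_add_p_eq_one_iff (p n : ℕ) (hp : p.Prime) (hodd : Odd p) (hn : 1 ≤ n)
    (m : ℕ) : ((p : ZMod (p ^ n)) + 1) ^ m = 1 ↔ p ^ (n - 1) ∣ m := by
  rcases Nat.eq_zero_or_pos m with rfl | hm
  · simp
  have hfin : FiniteMultiplicity p m := Nat.finiteMultiplicity_iff.2 ⟨hp.ne_one, hm⟩
  have hxy : (p : ℤ) ∣ (1 + p) - 1 := by simp
  have hx : ¬ (p : ℤ) ∣ (1 + p) := by
    intro h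
    have h1 : (p : ℤ) ∣ 1 := (dvd_add_right (dvd_refl (p : ℤ))).mp (by rwa [add_comm])
    have := Int.le_of_dvd one_pos h1
    have := hp.two_le
    omega
  have hlte := Int.emultiplicity_pow_sub_pow hp hodd hxy hx m
  rw [one_pow, show (1 + (p:ℤ)) - 1 = (p:ℤ) by ring] at hlte
  rw [show ((p:ℤ)) = ((p:ℕ):ℤ) by norm_num, Int.natCast_emultiplicity,
    hp.emultiplicity_self, hfin.emultiplicity_eq_multiplicity] at hlte
  have key : ((p : ZMod (p ^ n)) + 1) ^ m = 1 ↔ ((p ^ n : ℕ) : ℤ) ∣ ((1 + p) ^ m - 1 : ℤ) := by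
    rw [← ZMod.intCast_zmod_eq_zero_iff_dvd]
    push_cast
    rw [sub_eq_zero, add_comm]
  rw [key, show (((p^n : ℕ)):ℤ) = ((p:ℤ))^n by push_cast; ring,
    pow_dvd_iff_le_emultiplicity, hlte, hfin.pow_dvd_iff_le_multiplicity]
  constructor
  · intro h
    have h' : (n : ℕ∞) ≤ ((1 + multiplicity p m : ℕ) : ℕ∞) := by
      refine h.trans_eq ?_
      push_cast
      rfl
    have := (Nat.cast_le (α := ℕ∞)).mp h'
    omega
  · intro h
    have h' : (n : ℕ) ≤ 1 + multiplicity p m := by omega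
    calc (n : ℕ∞) ≤ ((1 + multiplicity p m : ℕ) : ℕ∞) := by exact_mod_cast h'
      _ = 1 + (multiplicity p m : ℕ∞) := by push_cast; rfl

lemma orderOf_unit_one_add_p (p n : ℕ) (hp : p.Prime) (hodd : Odd p) (hn : 1 ≤ n)
    (u : (ZMod (p ^ n))ˣ) (hu : (u : ZMod (p ^ n)) = (p : ZMod (p ^ n)) + 1) :
    orderOf u = p ^ (n - 1) := by
  have key : ∀ m : ℕ, u ^ m = 1 ↔ p ^ (n - 1) ∣ m := by
    intro m
    rw [Units.ext_iff, Units.val_pow_eq_pow_val, hu, Units.val_one]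
    exact pow_one_add_p_eq_one_iff p n hp hodd hn m
  exact Nat.dvd_antisymm (orderOf_dvd_of_pow_eq_one ((key _).2 dvd_rfl))
    ((key _).1 (pow_orderOf_eq_one u))

open scoped commutatorElement IsMulCommutative

/-- For odd `p` and `n ≥ 2`, with `N = Z/pⁿ`, `σ : x ↦ (p+1)·x` generating the
Sylow `p`-subgroup `K` of `Aut N`, and `G = N ⋊ K`, we have `|G : G'| = pⁿ`,
`|γᵢ(G) : γᵢ₊₁(G)| = p` for `i = 2, …, n`, and `G` has nilpotency class `n`.
(Here `γᵢ(G)` is `lowerCentralSeries G (i-1)` in Mathlib's indexing.) -/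
theorem lcs_of_cyclic_semidirect (p n : ℕ) (hp : p.Prime) (hodd : Odd p)
    (hn : 2 ≤ n) (u : (ZMod (p ^ n))ˣ)
    (hu : (u : ZMod (p ^ n)) = (p : ZMod (p ^ n)) + 1)
    (K : Subgroup (Multiplicative (AddAut (ZMod (p ^ n)))))
    (hK : K = Subgroup.zpowers (AddAut.mulLeft u)) :
    ∀ (G : Type) [Group G],
      Nonempty (G ≃* SemidirectProduct (Multiplicative (ZMod (p ^ n))) K
        ((addAutToMulAut (ZMod (p ^ n))).comp K.subtype)) →
      Nat.card (Abelianization G) = p ^ n ∧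
        (∀ i, 2 ≤ i → i ≤ n →
          ((⊤ : Subgroup G).lowerCentralSeries i).relIndex ((⊤ : Subgroup G).lowerCentralSeries (i - 1)) = p) ∧
        (⊤ : Subgroup G).lowerCentralSeries n = ⊥ ∧ (⊤ : Subgroup G).lowerCentralSeries (n - 1) ≠ ⊥ := by
  intro G _ hG
  obtain ⟨e⟩ := hG
  have hn0 : n ≠ 0 := by omega
  haveI : NeZero (p ^ n) := ⟨pow_ne_zero n hp.pos.ne'⟩
  -- the mod-p reduction
  set π : (ZMod (p ^ n)) →+* ZMod p := ZMod.castHom (dvd_pow_self p hn0) (ZMod p) with hπ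
  have hπp : π (p : (ZMod (p ^ n))) = 0 := by
    rw [map_natCast, ZMod.natCast_self]
  have hker : ∀ x : (ZMod (p ^ n)), π x = 0 → ∃ c : (ZMod (p ^ n)), x = c * p := by
    intro x hx
    have h1 : ((x.val : ℕ) : (ZMod (p ^ n))) = x := ZMod.natCast_rightInverse x
    have h2 : ((x.val : ℕ) : ZMod p) = 0 := by
      rw [← h1, map_natCast] at hx
      exact hx
    obtain ⟨t, ht⟩ := (ZMod.natCast_eq_zero_iff _ _).1 h2
    exact ⟨t, by rw [← h1, ht]; push_cast; ring⟩
  have hπu : ∀ m : ℤ, π ((u ^ m : (ZMod (p ^ n))ˣ) : (ZMod (p ^ n))) = 1 := by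
    intro m
    have h1 : Units.map (π : (ZMod (p ^ n)) →+* ZMod p).toMonoidHom u = 1 := by
      ext
      rw [Units.coe_map]
      simp only [RingHom.toMonoidHom_eq_coe, MonoidHom.coe_coe, hu, map_add, hπp, map_one,
        Units.val_one, zero_add]
    calc π ((u ^ m : (ZMod (p ^ n))ˣ) : (ZMod (p ^ n))) = ((Units.map (π : (ZMod (p ^ n)) →+* ZMod p).toMonoidHom (u^m) : (ZMod p)ˣ) : ZMod p) := by
          rw [Units.coe_map]; rfl
      _ = 1 := by rw [map_zpow, h1, one_zpow, Units.val_one]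
  have hdvd : ∀ m : ℤ, ∃ w : (ZMod (p ^ n)), ((u ^ m : (ZMod (p ^ n))ˣ) : (ZMod (p ^ n))) = 1 + p * w := by
    intro m
    obtain ⟨c, hc⟩ := hker (((u ^ m : (ZMod (p ^ n))ˣ) : (ZMod (p ^ n))) - 1) (by rw [map_sub, hπu, map_one, sub_self])
    exact ⟨c, by have := hc.symm; linear_combination hc⟩
  -- the action of elements of K
  have hKform : ∀ κ : K, ∃ v : (ZMod (p ^ n)), ∀ x : (ZMod (p ^ n)), (Multiplicative.toAdd (K.subtype κ)) x = (1 + p * v) * x := by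
    intro κ
    have hmem : (κ : Multiplicative (AddAut (ZMod (p ^ n)))) ∈ Subgroup.zpowers (AddAut.mulLeft u) := by
      rw [← hK]; exact κ.2
    obtain ⟨m, hm⟩ := Subgroup.mem_zpowers_iff.1 hmem
    obtain ⟨v, hv⟩ := hdvd m
    refine ⟨v, fun x => ?_⟩
    have h1 : (Multiplicative.toAdd (κ : Multiplicative (AddAut (ZMod (p ^ n))))) x = (Multiplicative.toAdd (AddAut.mulLeft (u ^ m))) x := by
      rw [map_zpow, hm]
    rw [Subgroup.coe_subtype]
    rw [h1]
    show ((u^m : (ZMod (p ^ n))ˣ) : (ZMod (p ^ n))) * x = _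
    rw [hv]
  -- the subgroups Z k and M k
  set Z : ℕ → Subgroup (Multiplicative (ZMod (p ^ n))) :=
    fun k => AddSubgroup.toSubgroup (AddSubgroup.zmultiples ((p : (ZMod (p ^ n))) ^ k)) with hZdef
  have hZmem : ∀ (k : ℕ) (x : Multiplicative (ZMod (p ^ n))),
      x ∈ Z k ↔ ∃ c : (ZMod (p ^ n)), Multiplicative.toAdd x = c * (p : (ZMod (p ^ n))) ^ k := by
    intro k x
    have h1 : x ∈ Z k ↔ Multiplicative.toAdd x ∈ AddSubgroup.zmultiples ((p : (ZMod (p ^ n))) ^ k) :=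
      Iff.rfl
    rw [h1, AddSubgroup.mem_zmultiples_iff]
    constructor
    · rintro ⟨z, hz⟩
      exact ⟨(z : (ZMod (p ^ n))), by rw [← hz, zsmul_eq_mul]⟩
    · rintro ⟨c, hc⟩
      obtain ⟨z, rfl⟩ := ZMod.intCast_surjective c
      exact ⟨z, by rw [zsmul_eq_mul, ← hc]⟩
  set M : ℕ → Subgroup (SemidirectProduct (Multiplicative (ZMod (p ^ n))) K ((addAutToMulAut (ZMod (p ^ n))).comp K.subtype)) := fun k => (Z k).map SemidirectProduct.inl with hMdef
  -- commutator formula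
  have hcomm : ∀ (a : Multiplicative (ZMod (p ^ n))) (g : (SemidirectProduct (Multiplicative (ZMod (p ^ n))) K ((addAutToMulAut (ZMod (p ^ n))).comp K.subtype))),
      ⁅(SemidirectProduct.inl a : (SemidirectProduct (Multiplicative (ZMod (p ^ n))) K ((addAutToMulAut (ZMod (p ^ n))).comp K.subtype))), g⁆ = SemidirectProduct.inl
        (Multiplicative.ofAdd (Multiplicative.toAdd a - (Multiplicative.toAdd (K.subtype g.right)) (Multiplicative.toAdd a))) := by
    intro a g
    rw [commutatorElement_def]
    apply SemidirectProduct.ext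
    · simp only [commutatorElement_def, sub_eq_add_neg, SemidirectProduct.mul_left,
        SemidirectProduct.mul_right, SemidirectProduct.inv_left, SemidirectProduct.inv_right,
        SemidirectProduct.left_inl, SemidirectProduct.right_inl, map_mul, map_inv, map_one,
        MonoidHom.comp_apply, one_mul, mul_one, inv_one, MulAut.one_apply,
        MulAut.apply_inv_self]
      rw [mul_right_comm, mul_inv_cancel_right]
      rfl
    · simp [commutatorElement_def, div_eq_mul_inv]
  -- the distinguished generator of K
  have hσK : AddAut.mulLeft u ∈ K := by rw [hK]; exact Subgroup.mem_zpowers _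
  set σK : K := ⟨AddAut.mulLeft u, hσK⟩ with hσKdef
  -- the commutator step
  have hstep : ∀ j : ℕ, ⁅M j, (⊤ : Subgroup (SemidirectProduct (Multiplicative (ZMod (p ^ n))) K ((addAutToMulAut (ZMod (p ^ n))).comp K.subtype)))⁆ = M (j + 1) := by
    intro j
    apply le_antisymm
    · rw [Subgroup.commutator_le]
      rintro x ⟨b, hb, rfl⟩ g -
      rw [hcomm]
      obtain ⟨c, hc⟩ := (hZmem j b).1 hb
      obtain ⟨v, hv⟩ := hKform g.right
      refine Subgroup.mem_map.2 ⟨_, (hZmem (j+1) _).2 ⟨-(v * c), ?_⟩, rfl⟩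
      rw [toAdd_ofAdd, hv, hc]
      ring
    · rintro s ⟨b, hb, rfl⟩
      obtain ⟨c, hc⟩ := (hZmem (j+1) b).1 hb
      have hb' : SemidirectProduct.inl b =
          ⁅(SemidirectProduct.inl (Multiplicative.ofAdd (-(c * (p:(ZMod (p ^ n))) ^ j))) : (SemidirectProduct (Multiplicative (ZMod (p ^ n))) K ((addAutToMulAut (ZMod (p ^ n))).comp K.subtype))),
            (SemidirectProduct.inr σK : (SemidirectProduct (Multiplicative (ZMod (p ^ n))) K ((addAutToMulAut (ZMod (p ^ n))).comp K.subtype)))⁆ := by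
        rw [hcomm]
        congr 1
        have h1 : (K.subtype (SemidirectProduct.inr (φ := (addAutToMulAut (ZMod (p^n))).comp K.subtype) σK).right)
            = AddAut.mulLeft u := rfl
        rw [h1]
        show b = Multiplicative.ofAdd (-(c * (p:(ZMod (p ^ n)))^j) - (u : (ZMod (p ^ n))) * (-(c * (p:(ZMod (p ^ n)))^j)))
        rw [hu]
        rw [show (-(c * (p:(ZMod (p ^ n)))^j) - ((p:(ZMod (p ^ n)))+1) * (-(c * (p:(ZMod (p ^ n)))^j))) = c * (p:(ZMod (p ^ n)))^(j+1) by ring]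
        rw [← hc]
        rfl
      rw [hb']
      exact Subgroup.commutator_mem_commutator
        ⟨_, (hZmem j _).2 ⟨-c, by rw [toAdd_ofAdd]; ring⟩, rfl⟩ (Subgroup.mem_top _)
  haveI hKcomm : IsMulCommutative K := hK ▸ Subgroup.zpowers_isMulCommutative _
  have hπK : ∀ (κ : ↥K) (x : (ZMod (p ^ n))), π ((Multiplicative.toAdd (K.subtype κ)) x) = π x := by
    intro κ x
    obtain ⟨v, hv⟩ := hKform κ
    rw [hv, map_mul, map_add, map_one, map_mul, hπp, zero_mul, add_zero, one_mul]
  set F : (SemidirectProduct (Multiplicative (ZMod (p ^ n))) K ((addAutToMulAut (ZMod (p ^ n))).comp K.subtype)) →* Multiplicative (ZMod p) × ↥K :=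
    { toFun := fun s => (Multiplicative.ofAdd (π (Multiplicative.toAdd s.left)), s.right),
      map_one' := by
        refine Prod.ext ?_ rfl
        show Multiplicative.ofAdd (π (Multiplicative.toAdd (1 : Multiplicative (ZMod (p ^ n))))) = 1
        simp
      map_mul' := fun s t => by
        refine Prod.ext ?_ rfl
        have h1 : Multiplicative.toAdd (s * t).left =
            Multiplicative.toAdd s.left + (Multiplicative.toAdd (K.subtype s.right)) (Multiplicative.toAdd t.left) := rfl
        show Multiplicative.ofAdd (π (Multiplicative.toAdd (s * t).left)) = _
        rw [h1, map_add, hπK]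
        rfl } with hFdef
  have hbase : commutator (SemidirectProduct (Multiplicative (ZMod (p ^ n))) K ((addAutToMulAut (ZMod (p ^ n))).comp K.subtype)) ≤ M 1 := by
    intro s hs
    have h1 := Abelianization.commutator_subset_ker F hs
    rw [MonoidHom.mem_ker] at h1
    have h2 : Multiplicative.ofAdd (π (Multiplicative.toAdd s.left)) = 1 := congrArg Prod.fst h1
    have h3 : s.right = 1 := congrArg Prod.snd h1
    obtain ⟨c, hc⟩ := hker (Multiplicative.toAdd s.left) (by rwa [ofAdd_eq_one] at h2)
    refine Subgroup.mem_map.2 ⟨s.left, (hZmem 1 _).2 ⟨c, by rw [hc, pow_one]⟩, ?_⟩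
    exact SemidirectProduct.ext rfl h3.symm
  have hlcs : ∀ k : ℕ, (⊤ : Subgroup (SemidirectProduct (Multiplicative (ZMod (p ^ n))) K ((addAutToMulAut (ZMod (p ^ n))).comp K.subtype))).lowerCentralSeries (k + 1) = M (k + 1) := by
    intro k
    induction k with
    | zero =>
      apply le_antisymm
      · exact hbase
      · rw [← hstep 0]
        exact Subgroup.commutator_mono le_top le_top
    | succ k ih =>
      show ⁅(⊤ : Subgroup (SemidirectProduct (Multiplicative (ZMod (p ^ n))) K ((addAutToMulAut (ZMod (p ^ n))).comp K.subtype))).lowerCentralSeries (k + 1), ⊤⁆ = M (k + 2)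
      rw [ih, hstep]
  -- cardinalities
  have hcardZ : ∀ k : ℕ, k ≤ n → Nat.card (Z k) = p ^ (n - k) := by
    intro k hk
    have h0 : Nat.card (Z k) = Nat.card (AddSubgroup.zmultiples ((p : (ZMod (p ^ n))) ^ k)) :=
      Nat.card_congr ⟨fun a => ⟨Multiplicative.toAdd a.1, a.2⟩,
        fun a => ⟨Multiplicative.ofAdd a.1, a.2⟩, fun _ => rfl, fun _ => rfl⟩
    have h1 : ((p : (ZMod (p ^ n)))) ^ k = ((p ^ k : ℕ) : (ZMod (p ^ n))) := by push_cast; ring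
    rw [h0, Nat.card_zmultiples, h1, ZMod.addOrderOf_coe _ (NeZero.ne (p ^ n)),
      Nat.gcd_eq_right (pow_dvd_pow p hk), Nat.pow_div hk hp.pos]
  have hcardM : ∀ k, Nat.card (M k) = Nat.card (Z k) := fun k =>
    Nat.card_congr (Subgroup.equivMapOfInjective (Z k) _ SemidirectProduct.inl_injective).toEquiv.symm
  have hcardK : Nat.card K = p ^ (n - 1) := by
    have hinj : Function.Injective (AddAut.mulLeft : (ZMod (p ^ n))ˣ →* Multiplicative (AddAut (ZMod (p ^ n)))) := by
      intro a b h
      have h1 : (Multiplicative.toAdd (AddAut.mulLeft a)) (1 : (ZMod (p ^ n))) = (Multiplicative.toAdd (AddAut.mulLeft b)) (1 : (ZMod (p ^ n))) := by rw [h]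
      have h2 : (a : (ZMod (p ^ n))) * 1 = (b : (ZMod (p ^ n))) * 1 := h1
      exact Units.ext (by simpa using h2)
    rw [hK, Nat.card_zpowers, orderOf_injective _ hinj u,
      orderOf_unit_one_add_p p n hp hodd (by omega) u hu]
  have hcardS : Nat.card (SemidirectProduct (Multiplicative (ZMod (p ^ n))) K ((addAutToMulAut (ZMod (p ^ n))).comp K.subtype)) = p ^ (2 * n - 1) := by
    have h1 : Nat.card (SemidirectProduct (Multiplicative (ZMod (p ^ n))) K ((addAutToMulAut (ZMod (p ^ n))).comp K.subtype)) = Nat.card (Multiplicative (ZMod (p ^ n))) * Nat.card (↥K) := by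
      rw [← Nat.card_prod]
      exact Nat.card_congr ⟨fun s => (s.left, s.right), fun c => ⟨c.1, c.2⟩,
        fun s => rfl, fun c => rfl⟩
    have h2 : Nat.card (Multiplicative (ZMod (p ^ n))) = p ^ n := by
      rw [Nat.card_congr (Multiplicative.toAdd (α := (ZMod (p ^ n))) : Multiplicative (ZMod (p ^ n)) ≃ (ZMod (p ^ n))), Nat.card_zmod]
    rw [h1, h2, hcardK, ← pow_add]
    congr 1
    omega
  have hindexM : ∀ k, k ≤ n → (M k).index = p ^ (n - 1 + k) := by
    intro k hk
    have h1 := Subgroup.card_mul_index (M k)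
    rw [hcardM k, hcardZ k hk, hcardS] at h1
    have h2 : p ^ (n - k) * p ^ (n - 1 + k) = p ^ (2 * n - 1) := by
      rw [← pow_add]; congr 1; omega
    exact Nat.eq_of_mul_eq_mul_left (pow_pos hp.pos _) (h1.trans h2.symm)
  -- transport along the isomorphism
  have hmap : ∀ i, ((⊤ : Subgroup G).lowerCentralSeries i).map e.toMonoidHom = (⊤ : Subgroup (SemidirectProduct (Multiplicative (ZMod (p ^ n))) K ((addAutToMulAut (ZMod (p ^ n))).comp K.subtype))).lowerCentralSeries i := by
    intro i
    induction i with
    | zero => exact Subgroup.map_top_of_surjective _ e.surjective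
    | succ i ih =>
      show Subgroup.map e.toMonoidHom ⁅(⊤ : Subgroup G).lowerCentralSeries i, ⊤⁆ = ⁅(⊤ : Subgroup (SemidirectProduct (Multiplicative (ZMod (p ^ n))) K ((addAutToMulAut (ZMod (p ^ n))).comp K.subtype))).lowerCentralSeries i, ⊤⁆
      rw [Subgroup.map_commutator, ih, Subgroup.map_top_of_surjective _ e.surjective]
  have hkere : e.toMonoidHom.ker = ⊥ := (MonoidHom.ker_eq_bot_iff _).mpr e.injective
  have hindexG : ∀ i, ((⊤ : Subgroup G).lowerCentralSeries i).index = ((⊤ : Subgroup (SemidirectProduct (Multiplicative (ZMod (p ^ n))) K ((addAutToMulAut (ZMod (p ^ n))).comp K.subtype))).lowerCentralSeries i).index := by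
    intro i
    rw [← hmap i, Subgroup.index_map_eq _ e.surjective (hkere ▸ bot_le)]
  have hidx : ∀ i, 1 ≤ i → i ≤ n → ((⊤ : Subgroup G).lowerCentralSeries i).index = p ^ (n - 1 + i) := by
    intro i h1 h2
    have h3 : (⊤ : Subgroup (SemidirectProduct (Multiplicative (ZMod (p ^ n))) K ((addAutToMulAut (ZMod (p ^ n))).comp K.subtype))).lowerCentralSeries i = M i := by
      have := hlcs (i - 1)
      rwa [Nat.sub_add_cancel h1] at this
    rw [hindexG, h3, hindexM i h2]
  refine ⟨?_, ?_, ?_, ?_⟩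
  · have h1 : Nat.card (Abelianization G) = (commutator G).index := rfl
    rw [h1, ← Subgroup.top_lowerCentralSeries_one, hidx 1 le_rfl (by omega)]
    congr 1
    omega
  · intro i h2 hin
    have hle : (⊤ : Subgroup G).lowerCentralSeries i ≤ (⊤ : Subgroup G).lowerCentralSeries (i - 1) :=
      (⊤ : Subgroup G).lowerCentralSeries_antitone (by omega)
    have h := Subgroup.relIndex_mul_index hle
    rw [hidx i (by omega) hin, hidx (i - 1) (by omega) (by omega)] at h
    have h4 : p ^ (n - 1 + i) = p * p ^ (n - 1 + (i - 1)) := by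
      rw [← pow_succ']
      congr 1
      omega
    rw [h4] at h
    exact Nat.eq_of_mul_eq_mul_right (pow_pos hp.pos _) h
  · have h1 : (⊤ : Subgroup (SemidirectProduct (Multiplicative (ZMod (p ^ n))) K ((addAutToMulAut (ZMod (p ^ n))).comp K.subtype))).lowerCentralSeries n = M n := by
      have := hlcs (n - 1)
      rwa [Nat.sub_add_cancel (by omega)] at this
    have h3 : ((p : (ZMod (p ^ n)))) ^ n = 0 := by
      have h0 : ((p ^ n : ℕ) : (ZMod (p ^ n))) = 0 := ZMod.natCast_self _
      push_cast at h0
      exact h0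
    have h2 : Z n = ⊥ := by
      show AddSubgroup.toSubgroup (AddSubgroup.zmultiples ((p : (ZMod (p ^ n))) ^ n)) = ⊥
      rw [h3, AddSubgroup.zmultiples_zero_eq_bot]
      exact OrderIso.map_bot _
    have h4 : M n = ⊥ := by
      show Subgroup.map _ (Z n) = ⊥
      rw [h2, Subgroup.map_bot]
    have h5 : ((⊤ : Subgroup G).lowerCentralSeries n).map e.toMonoidHom = ⊥ := by rw [hmap, h1, h4]
    exact (Subgroup.map_eq_bot_iff_of_injective (H := (⊤ : Subgroup G).lowerCentralSeries n) (f := e.toMonoidHom) e.injective).1 h5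
  · intro hbot
    have h1 : (⊤ : Subgroup (SemidirectProduct (Multiplicative (ZMod (p ^ n))) K ((addAutToMulAut (ZMod (p ^ n))).comp K.subtype))).lowerCentralSeries (n - 1) = M (n - 1) := by
      have := hlcs (n - 2)
      rwa [show n - 2 + 1 = n - 1 by omega] at this
    have h2 : M (n - 1) = ⊥ := by rw [← h1, ← hmap, hbot, Subgroup.map_bot]
    have h3 : (SemidirectProduct.inl (Multiplicative.ofAdd ((p : (ZMod (p ^ n))) ^ (n - 1))) : (SemidirectProduct (Multiplicative (ZMod (p ^ n))) K ((addAutToMulAut (ZMod (p ^ n))).comp K.subtype))) ∈ M (n - 1) :=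
      Subgroup.mem_map.2 ⟨_, (hZmem (n - 1) _).2 ⟨1, by rw [toAdd_ofAdd, one_mul]⟩, rfl⟩
    rw [h2, Subgroup.mem_bot] at h3
    have h4 : ((p : (ZMod (p ^ n)))) ^ (n - 1) = 0 := by
      have := congrArg (fun s : (SemidirectProduct (Multiplicative (ZMod (p ^ n))) K ((addAutToMulAut (ZMod (p ^ n))).comp K.subtype)) => Multiplicative.toAdd s.left) h3
      simpa using this
    have h5 : ((p ^ (n - 1) : ℕ) : (ZMod (p ^ n))) = 0 := by push_cast; exact h4
    rw [ZMod.natCast_eq_zero_iff] at h5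
    have h6 := (Nat.pow_dvd_pow_iff_le_right hp.one_lt).1 h5
    omega
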